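/- arXiv:2401.09273 — 9 statements merged into one kernel-verified Lean document; each statement's English description precedes it below -/
import Mathlib

section
/- Let (S,Σ) and (S',Σ') be measurable spaces and R a binary relation on the disjoint sum S ⊕ S' such that R only relates elements within the same summand (R ⊆ inl(S)² ∪ inr(S')²). Then the restriction to S of the family of R-closed sets in the sum σ-algebra equals the family of (R restricted to S)-closed sets in Σ: (Σ ⊕ Σ')(R) ↾ S = Σ(R ↾ S). -/
open MeasureTheory

/-- A labelled Markov process: a family of Markov (sub-probability) kernels indexed by labels. -/
structure LMP (L : Type*) (S : Type*) [MeasurableSpace S] where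
  τ : L → S → Measure S
  prob : ∀ a s, τ a s Set.univ ≤ 1
  meas : ∀ a (B : Set S), MeasurableSet B → Measurable fun s => τ a s B

/-- A set `X` is `R`-closed if it contains every point related (in either direction)
to one of its points. -/
def RClosed {S : Type*} (R : S → S → Prop) (X : Set S) : Prop :=
  ∀ x ∈ X, ∀ s, R x s ∨ R s x → s ∈ X

/-- A pair `(A, A')` is an `R`-closed pair. -/
def RClosedPair {S S' : Type*} (R : S → S' → Prop) (A : Set S) (A' : Set S') : Prop :=
  ∀ s s', R s s' → (s ∈ A ↔ s' ∈ A')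

section LMPdefs

variable {L S S' : Type*} [MeasurableSpace S] [MeasurableSpace S']

/-- Internal state bisimulation on an LMP. -/
def IsStateBisim (M : LMP L S) (R : S → S → Prop) : Prop :=
  ∀ s t, R s t → ∀ C : Set S, MeasurableSet C → RClosed R C →
    ∀ a, M.τ a s C = M.τ a t C

/-- State bisimilarity: two states are related by some state bisimulation. -/
def StateBisimilar (M : LMP L S) (s t : S) : Prop :=
  ∃ R, IsStateBisim M R ∧ R s t

/-- Zigzag morphism between LMPs. -/
def IsZigzag (M : LMP L S) (M' : LMP L S') (f : S → S') : Prop :=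
  Measurable f ∧ ∀ a s (B : Set S'), MeasurableSet B → M.τ a s (f ⁻¹' B) = M'.τ a (f s) B

/-- External (×-)bisimulation between two LMPs. -/
def IsExtBisim (M : LMP L S) (M' : LMP L S') (R : S → S' → Prop) : Prop :=
  ∀ s s', R s s' → ∀ (A : Set S) (A' : Set S'), MeasurableSet A → MeasurableSet A' →
    RClosedPair R A A' → ∀ a, M.τ a s A = M'.τ a s' A'

/-- External bisimilarity. -/
def ExtBisimilar (M : LMP L S) (M' : LMP L S') (s : S) (s' : S') : Prop :=
  ∃ R, IsExtBisim M M' R ∧ R s s'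

/-- The copy of `A ⊕ A'` inside the disjoint sum. -/
def sumSet (A : Set S) (A' : Set S') : Set (S ⊕ S') := Sum.inl '' A ∪ Sum.inr '' A'

/-- The direct sum of two LMPs. -/
noncomputable def LMP.sum (M : LMP L S) (M' : LMP L S') : LMP L (S ⊕ S') where
  τ a := Sum.elim (fun s => (M.τ a s).map Sum.inl) (fun s' => (M'.τ a s').map Sum.inr)
  prob a x := by
    cases x with
    | inl s =>
        simpa [Measure.map_apply measurable_inl MeasurableSet.univ] using M.prob a s
    | inr s' =>
        simpa [Measure.map_apply measurable_inr MeasurableSet.univ] using M'.prob a s'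
  meas a B hB := by
    have h : (fun x => Sum.elim (fun s => (M.τ a s).map Sum.inl)
          (fun s' => (M'.τ a s').map Sum.inr) x B)
        = Sum.elim (fun s => M.τ a s (Sum.inl ⁻¹' B))
            (fun s' => M'.τ a s' (Sum.inr ⁻¹' B)) := by
      funext x
      cases x with
      | inl s => simp [Measure.map_apply measurable_inl hB]
      | inr s' => simp [Measure.map_apply measurable_inr hB]
    rw [h]
    exact Measurable.sumElim (M.meas a _ (hB.preimage measurable_inl))
      (M'.meas a _ (hB.preimage measurable_inr))

end LMPdefs

/-- If a relation on a sum only relates elements within the same summand, then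
(Σ ⊕ Σ')(R) ↾ S = Σ(R ↾ S). -/
theorem stmt2 {S S' : Type*} [MeasurableSpace S] [MeasurableSpace S']
    (R : S ⊕ S' → S ⊕ S' → Prop)
    (hR : ∀ x y, R x y → (∃ s t : S, x = Sum.inl s ∧ y = Sum.inl t) ∨
      (∃ s t : S', x = Sum.inr s ∧ y = Sum.inr t)) :
    {A : Set S | ∃ Q : Set (S ⊕ S'), MeasurableSet Q ∧ RClosed R Q ∧ A = Sum.inl ⁻¹' Q}
      = {A : Set S | MeasurableSet A ∧ RClosed (fun s₁ s₂ => R (Sum.inl s₁) (Sum.inl s₂)) A} := by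
  ext A
  constructor
  · rintro ⟨Q, hQm, hQc, rfl⟩
    refine ⟨hQm.preimage measurable_inl, ?_⟩
    intro x hx s hs
    exact hQc _ hx _ hs
  · rintro ⟨hAm, hAc⟩
    refine ⟨Sum.inl '' A ∪ Set.range Sum.inr, ?_, ?_, ?_⟩
    · exact (measurableSet_inl_image.mpr hAm).union measurableSet_range_inr
    · rintro x hx y hy
      rcases hy with hy | hy
      · rcases hR _ _ hy with ⟨s, t, rfl, rfl⟩ | ⟨s, t, rfl, rfl⟩
        · rcases hx with ⟨u, hu, hxe⟩ | ⟨u, hxe⟩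
          · cases hxe
            exact Or.inl ⟨t, hAc _ hu _ (Or.inl hy), rfl⟩
          · exact absurd hxe (by simp)
        · exact Or.inr ⟨t, rfl⟩
      · rcases hR _ _ hy with ⟨s, t, rfl, rfl⟩ | ⟨s, t, rfl, rfl⟩
        · rcases hx with ⟨u, hu, hxe⟩ | ⟨u, hxe⟩
          · cases hxe
            exact Or.inl ⟨s, hAc _ hu _ (Or.inr hy), rfl⟩
          · exact absurd hxe (by simp)
        · exact Or.inr ⟨s, rfl⟩
    · simp [Set.preimage_union, Set.preimage_image_eq _ Sum.inl_injective]
end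

section
/- If f : S → S' is a zigzag morphism between LMPs and s ∼ₛ t in S, then f(s) ∼ₛ f(t) in S'. (The image relation f[R] = {(f(x),f(y)) | x R y} of a state bisimulation R is a state bisimulation.) -/
open MeasureTheory

/-- Zigzag morphisms preserve state bisimilarity; the image of a state bisimulation
is a state bisimulation. -/
theorem stmt4 {L S S' : Type*} [MeasurableSpace S] [MeasurableSpace S']
    (M : LMP L S) (M' : LMP L S') (f : S → S') (hf : IsZigzag M M' f) :
    (∀ R : S → S → Prop, IsStateBisim M R →
      IsStateBisim M' (fun x' y' => ∃ x y, R x y ∧ x' = f x ∧ y' = f y)) ∧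
    (∀ s t, StateBisimilar M s t → StateBisimilar M' (f s) (f t)) := by
  have key : ∀ R : S → S → Prop, IsStateBisim M R →
      IsStateBisim M' (fun x' y' => ∃ x y, R x y ∧ x' = f x ∧ y' = f y) := by
    intro R hR s' t' ⟨x, y, hxy, hs', ht'⟩ C hC hCcl a
    have hpre : RClosed R (f ⁻¹' C) := by
      intro u hu v huv
      have : (∃ x y, R x y ∧ f u = f x ∧ f v = f y) ∨
          (∃ x y, R x y ∧ f v = f x ∧ f u = f y) := by
        rcases huv with h | h
        · exact Or.inl ⟨u, v, h, rfl, rfl⟩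
        · exact Or.inr ⟨v, u, h, rfl, rfl⟩
      exact hCcl (f u) hu (f v) this
    have h1 := hf.2 a x C hC
    have h2 := hf.2 a y C hC
    have h3 := hR x y hxy (f ⁻¹' C) (hC.preimage hf.1) hpre a
    rw [hs', ht', ← h1, ← h2, h3]
  refine ⟨key, fun s t ⟨R, hR, hst⟩ =>
    ⟨_, key R hR, s, t, hst, rfl, rfl⟩⟩
end

section
/- For any LMP 𝕊, state bisimilarity on the direct sum 𝕊 ⊕ 𝕊 equals the complete lifting of state bisimilarity on 𝕊: ∼ₛ,𝕊⊕𝕊 = (∼ₛ,𝕊)⁺. -/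
open MeasureTheory

/-- The complete lifting of a relation R on S to the sum S ⊕ S. -/
def plusLift {S : Type*} (R : S → S → Prop) : S ⊕ S → S ⊕ S → Prop :=
  fun u v => ∃ s t, R s t ∧ (u = Sum.inl s ∨ u = Sum.inr s) ∧ (v = Sum.inl t ∨ v = Sum.inr t)

section Proof6
variable {L S : Type*} [MeasurableSpace S]

private lemma bisim_refl (M : LMP L S) (s : S) : StateBisimilar M s s :=
  ⟨Eq, fun _ _ h _ _ _ _ => by subst h; rfl, rfl⟩

private lemma bisim_top (M : LMP L S) : IsStateBisim M (StateBisimilar M) := by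
  rintro s t ⟨R, hR, hst⟩ C hC hcl a
  exact hR s t hst C hC
    (fun x hx s' hs' => hcl x hx s'
      (hs'.imp (fun h => ⟨R, hR, h⟩) (fun h => ⟨R, hR, h⟩))) a

private lemma sum_copy_apply (M : LMP L S) (a : L) (s : S) (u : S ⊕ S)
    (h : u = Sum.inl s ∨ u = Sum.inr s) (C : Set (S ⊕ S)) (hC : MeasurableSet C)
    (hsym : Sum.inr ⁻¹' C = Sum.inl ⁻¹' C) :
    (M.sum M).τ a u C = M.τ a s (Sum.inl ⁻¹' C) := by
  rcases h with rfl | rfl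
  · show ((M.τ a s).map Sum.inl) C = _
    exact MeasureTheory.Measure.map_apply measurable_inl hC
  · show ((M.τ a s).map Sum.inr) C = _
    rw [MeasureTheory.Measure.map_apply measurable_inr hC, hsym]

end Proof6

/-- State bisimilarity on 𝕊 ⊕ 𝕊 is the complete lifting of state bisimilarity on 𝕊. -/
theorem stmt6 {L S : Type*} [MeasurableSpace S] (M : LMP L S) :
    ∀ u v : S ⊕ S, StateBisimilar (M.sum M) u v ↔ plusLift (StateBisimilar M) u v := by
  intro u v
  constructor
  · rintro ⟨R, hR, huv⟩
    set R' : S → S → Prop := fun s t => ∃ u' v', R u' v' ∧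
      (u' = Sum.inl s ∨ u' = Sum.inr s) ∧ (v' = Sum.inl t ∨ v' = Sum.inr t) with hR'def
    have hbis : IsStateBisim M R' := by
      rintro s t ⟨u', v', huv', hu', hv'⟩ C hC hcl a
      have hCm : MeasurableSet (sumSet C C) :=
        (hC.inl_image).union (measurableSet_inr_image.2 hC)
      have hclosed : RClosed R (sumSet C C) := by
        intro x hx w hw
        obtain ⟨c, hc, hxc⟩ : ∃ c, c ∈ C ∧ (x = Sum.inl c ∨ x = Sum.inr c) := by
          rcases hx with ⟨c, hc, rfl⟩ | ⟨c, hc, rfl⟩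
          · exact ⟨c, hc, Or.inl rfl⟩
          · exact ⟨c, hc, Or.inr rfl⟩
        obtain ⟨d, hwd⟩ : ∃ d, w = Sum.inl d ∨ w = Sum.inr d := by
          cases w with
          | inl d => exact ⟨d, Or.inl rfl⟩
          | inr d => exact ⟨d, Or.inr rfl⟩
        have hd : d ∈ C := hcl c hc d
          (hw.imp (fun h => ⟨x, w, h, hxc, hwd⟩) (fun h => ⟨w, x, h, hwd, hxc⟩))
        rcases hwd with rfl | rfl
        · exact Or.inl ⟨d, hd, rfl⟩
        · exact Or.inr ⟨d, hd, rfl⟩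
      have hsym : Sum.inr ⁻¹' (sumSet C C) = Sum.inl ⁻¹' (sumSet C C) := by
        simp [sumSet, Set.preimage_union, Set.preimage_image_eq _ Sum.inl_injective,
          Set.preimage_image_eq _ Sum.inr_injective]
      have hpre : Sum.inl ⁻¹' (sumSet C C) = C := by
        simp [sumSet, Set.preimage_union, Set.preimage_image_eq _ Sum.inl_injective]
      have h1 := hR u' v' huv' _ hCm hclosed a
      rw [sum_copy_apply M a s u' hu' _ hCm hsym, sum_copy_apply M a t v' hv' _ hCm hsym,
        hpre] at h1
      exact h1
    obtain ⟨s, hu⟩ : ∃ s, u = Sum.inl s ∨ u = Sum.inr s := by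
      cases u with
      | inl s => exact ⟨s, Or.inl rfl⟩
      | inr s => exact ⟨s, Or.inr rfl⟩
    obtain ⟨t, hv⟩ : ∃ t, v = Sum.inl t ∨ v = Sum.inr t := by
      cases v with
      | inl t => exact ⟨t, Or.inl rfl⟩
      | inr t => exact ⟨t, Or.inr rfl⟩
    exact ⟨s, t, ⟨R', hbis, u, v, huv, hu, hv⟩, hu, hv⟩
  · rintro ⟨s, t, hst, hu, hv⟩
    refine ⟨plusLift (StateBisimilar M), ?_, s, t, hst, hu, hv⟩
    rintro u' v' ⟨s', t', hst', hu', hv'⟩ C hC hcl a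
    have hsym : Sum.inr ⁻¹' C = Sum.inl ⁻¹' C := by
      ext x
      constructor
      · intro hx
        exact hcl _ hx _ (Or.inl ⟨x, x, bisim_refl M x, Or.inr rfl, Or.inl rfl⟩)
      · intro hx
        exact hcl _ hx _ (Or.inl ⟨x, x, bisim_refl M x, Or.inl rfl, Or.inr rfl⟩)
    have hDm : MeasurableSet (Sum.inl ⁻¹' C) := hC.preimage measurable_inl
    have hDcl : RClosed (StateBisimilar M) (Sum.inl ⁻¹' C) := by
      intro x hx w hw
      exact hcl _ hx (Sum.inl w)
        (hw.imp (fun h => ⟨x, w, h, Or.inl rfl, Or.inl rfl⟩)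
          (fun h => ⟨w, x, h, Or.inl rfl, Or.inl rfl⟩))
    rw [sum_copy_apply M a s' u' hu' C hC hsym, sum_copy_apply M a t' v' hv' C hC hsym]
    exact bisim_top M s' t' hst' _ hDm hDcl a
end

section
/- If R ⊆ S × S' is an external bisimulation between LMPs 𝕊 and 𝕊', then its lift R̂ = {(inl(s),inr(s')) | s R s'} is an internal state bisimulation on the direct sum 𝕊 ⊕ 𝕊'. Conversely, if R is an internal state bisimulation on 𝕊 ⊕ 𝕊' that only relates points in different summands (via inl and inr respectively), then its descent R_× is an external bisimulation. -/
open MeasureTheory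

/-- The lift of an external bisimulation is an internal state bisimulation on the sum;
conversely the descent of an internal bisimulation on the sum that relates only points
in different summands is an external bisimulation. -/
theorem stmt11 {L S S' : Type*} [MeasurableSpace S] [MeasurableSpace S']
    (M : LMP L S) (M' : LMP L S') :
    (∀ R : S → S' → Prop, IsExtBisim M M' R →
      IsStateBisim (M.sum M')
        (fun u v => ∃ s s', R s s' ∧ u = Sum.inl s ∧ v = Sum.inr s')) ∧
    (∀ R : S ⊕ S' → S ⊕ S' → Prop, IsStateBisim (M.sum M') R →
      (∀ u v, R u v → ∃ s s', u = Sum.inl s ∧ v = Sum.inr s') →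
      IsExtBisim M M' (fun s s' => R (Sum.inl s) (Sum.inr s'))) := by
  constructor
  · intro R hR u v huv C hC hCl a
    obtain ⟨s, s', hss', rfl, rfl⟩ := huv
    have hA : MeasurableSet (Sum.inl ⁻¹' C : Set S) := hC.preimage measurable_inl
    have hA' : MeasurableSet (Sum.inr ⁻¹' C : Set S') := hC.preimage measurable_inr
    have hPair : RClosedPair R (Sum.inl ⁻¹' C) (Sum.inr ⁻¹' C) := by
      intro t t' htt'
      constructor
      · intro ht
        exact hCl _ ht (Sum.inr t') (Or.inl ⟨t, t', htt', rfl, rfl⟩)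
      · intro ht'
        exact hCl _ ht' (Sum.inl t) (Or.inr ⟨t, t', htt', rfl, rfl⟩)
    have := hR s s' hss' _ _ hA hA' hPair a
    simp only [LMP.sum, Sum.elim_inl, Sum.elim_inr,
      Measure.map_apply measurable_inl hC, Measure.map_apply measurable_inr hC]
    exact this
  · intro R hR hshape s s' hss' A A' hA hA' hPair a
    set C : Set (S ⊕ S') := sumSet A A' with hCdef
    have hCm : MeasurableSet C :=
      (measurableSet_inl_image.mpr hA).union (measurableSet_inr_image.mpr hA')
    have hmem : ∀ t, Sum.inl t ∈ C ↔ t ∈ A := by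
      intro t; simp [hCdef, sumSet]
    have hmem' : ∀ t', Sum.inr t' ∈ C ↔ t' ∈ A' := by
      intro t'; simp [hCdef, sumSet]
    have hCl : RClosed R C := by
      intro x hx y hy
      rcases hy with h | h
      · obtain ⟨t, t', rfl, rfl⟩ := hshape _ _ h
        exact (hmem' t').mpr ((hPair t t' h).mp ((hmem t).mp hx))
      · obtain ⟨t, t', rfl, rfl⟩ := hshape _ _ h
        exact (hmem t).mpr ((hPair t t' h).mpr ((hmem' t').mp hx))
    have := hR _ _ hss' C hCm hCl a
    simp only [LMP.sum, Sum.elim_inl, Sum.elim_inr,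
      Measure.map_apply measurable_inl hCm, Measure.map_apply measurable_inr hCm] at this
    have e1 : Sum.inl ⁻¹' C = A := Set.ext fun t => hmem t
    have e2 : Sum.inr ⁻¹' C = A' := Set.ext fun t' => hmem' t'
    rwa [e1, e2] at this
end

section
/- If f : 𝕊 → 𝕊' is a zigzag morphism between LMPs, then graph(f) = {(s, f(s)) | s ∈ S} is an external bisimulation. Conversely, if f is measurable and surjective and graph(f) is an external bisimulation, then f is a zigzag morphism. -/
open MeasureTheory

/-- The graph of a zigzag morphism is an external bisimulation; conversely, a measurable
surjection whose graph is an external bisimulation is a zigzag morphism. -/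
theorem stmt13 {L S S' : Type*} [MeasurableSpace S] [MeasurableSpace S']
    (M : LMP L S) (M' : LMP L S') (f : S → S') :
    (IsZigzag M M' f → IsExtBisim M M' (fun s s' => s' = f s)) ∧
    (Measurable f → Function.Surjective f →
      IsExtBisim M M' (fun s s' => s' = f s) → IsZigzag M M' f) := by
  constructor
  · rintro ⟨hf, hz⟩ s s' rfl A A' hA hA' hpair a
    have hAeq : A = f ⁻¹' A' := by
      ext x
      exact hpair x (f x) rfl
    rw [hAeq, hz a s A' hA']
  · intro hf _ hbis
    refine ⟨hf, fun a s B hB => ?_⟩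
    exact hbis s (f s) rfl (f ⁻¹' B) B (hB.preimage hf) hB
      (fun x x' hx => by rw [hx]; rfl) a
end

section
/- Given a span of zigzag morphisms 𝕊 ←f– 𝕎 –g→ 𝕊' between LMPs, the relation {(f(w), g(w)) | w ∈ W} ⊆ S × S' is an external bisimulation; in particular f(w) ∼^× g(w) for every w ∈ W. -/
open MeasureTheory

/-- Given a span of zigzag morphisms 𝕊 ←f– 𝕎 –g→ 𝕊', the relation
{(f w, g w) | w ∈ W} is an external bisimulation; hence f(w) ∼^× g(w). -/
theorem stmt14 {L W S S' : Type*} [MeasurableSpace W] [MeasurableSpace S]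
    [MeasurableSpace S'] (MW : LMP L W) (M : LMP L S) (M' : LMP L S')
    (f : W → S) (g : W → S') (hf : IsZigzag MW M f) (hg : IsZigzag MW M' g) :
    IsExtBisim M M' (fun s s' => ∃ w, s = f w ∧ s' = g w) ∧
    ∀ w, ExtBisimilar M M' (f w) (g w) := by
  have hbis : IsExtBisim M M' (fun s s' => ∃ w, s = f w ∧ s' = g w) := by
    rintro s s' ⟨w, rfl, rfl⟩ A A' hA hA' hpair a
    have hpre : f ⁻¹' A = g ⁻¹' A' := by
      ext v
      exact hpair (f v) (g v) ⟨v, rfl, rfl⟩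
    rw [← hf.2 a w A hA, hpre, hg.2 a w A' hA']
  exact ⟨hbis, fun w => ⟨_, hbis, w, rfl, rfl⟩⟩
end

section
/- When 𝕊 = 𝕊', external bisimilarity coincides with internal state bisimilarity: ∼^×_{𝕊,𝕊} = ∼ₛ,𝕊. -/
open MeasureTheory

lemma stateBisimilar_isStateBisim {L S : Type*} [MeasurableSpace S] (M : LMP L S) :
    IsStateBisim M (StateBisimilar M) := by
  rintro s t ⟨R, hR, hst⟩ C hC hclosed a
  refine hR s t hst C hC ?_ a
  intro x hx u hu
  exact hclosed x hx u (hu.imp (fun h => ⟨R, hR, h⟩) (fun h => ⟨R, hR, h⟩))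

lemma stateBisimilar_refl {L S : Type*} [MeasurableSpace S] (M : LMP L S) (s : S) :
    StateBisimilar M s s :=
  ⟨Eq, fun _ _ h _ _ _ _ => by rw [h], rfl⟩

/-- For a single LMP, external bisimilarity coincides with internal state bisimilarity. -/
theorem stmt15 {L S : Type*} [MeasurableSpace S] (M : LMP L S) :
    ∀ s t : S, ExtBisimilar M M s t ↔ StateBisimilar M s t := by
  intro s t
  constructor
  · rintro ⟨R, hR, hst⟩
    refine ⟨R, ?_, hst⟩
    intro u v huv C hC hclosed a
    refine hR u v huv C C hC hC ?_ a
    intro x y hxy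
    constructor
    · intro hx; exact hclosed x hx y (Or.inl hxy)
    · intro hy; exact hclosed y hy x (Or.inr hxy)
  · rintro hst
    refine ⟨StateBisimilar M, ?_, hst⟩
    intro u v huv A A' hA hA' hpair a
    have hAA' : A = A' := by
      ext x
      exact hpair x x (stateBisimilar_refl M x)
    subst hAA'
    have hclosed : RClosed (StateBisimilar M) A := by
      intro x hx y hy
      rcases hy with h | h
      · exact (hpair x y h).1 hx
      · exact (hpair y x h).2 hx
    exact stateBisimilar_isStateBisim M u v huv A hA hclosed a
end

section
/- Let R be an ⊕-bisimulation between LMPs 𝕊 and 𝕊' such that dom(R_×) ∈ Σ and img(R_×) ∈ Σ'. Then: (a) for every s ∈ dom(R_×) and every label a, τ_a(s, S ∖ dom(R_×)) = 0; (b) the descent R_× is an external (×-)bisimulation between 𝕊 and 𝕊'. -/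
open MeasureTheory

/-- An ⊕-bisimulation between 𝕊 and 𝕊'. -/
def IsOplusBisim {L S S' : Type*} [MeasurableSpace S] [MeasurableSpace S']
    (M : LMP L S) (M' : LMP L S') (R : S ⊕ S' → S ⊕ S' → Prop) : Prop :=
  Equivalence R ∧
  ∀ s s', R (Sum.inl s) (Sum.inr s') →
    ∀ (A : Set S) (A' : Set S'), MeasurableSet A → MeasurableSet A' →
      RClosed R (sumSet A A') → ∀ a, M.τ a s A = M'.τ a s' A'

/-- If R is an ⊕-bisimulation with measurable dom(R_×) and img(R_×), then
(a) transitions from dom(R_×) give zero mass to its complement, and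
(b) the descent R_× is an external bisimulation. -/
theorem stmt18 {L S S' : Type*} [MeasurableSpace S] [MeasurableSpace S']
    (M : LMP L S) (M' : LMP L S') (R : S ⊕ S' → S ⊕ S' → Prop)
    (hR : IsOplusBisim M M' R)
    (hdom : MeasurableSet {s : S | ∃ s', R (Sum.inl s) (Sum.inr s')})
    (himg : MeasurableSet {s' : S' | ∃ s, R (Sum.inl s) (Sum.inr s')}) :
    (∀ s, (∃ s', R (Sum.inl s) (Sum.inr s')) →
      ∀ a, M.τ a s ({s : S | ∃ s', R (Sum.inl s) (Sum.inr s')}ᶜ) = 0) ∧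
    IsExtBisim M M' (fun s s' => R (Sum.inl s) (Sum.inr s')) := by
  obtain ⟨heq, hbis⟩ := hR
  set D := {s : S | ∃ s', R (Sum.inl s) (Sum.inr s')} with hDdef
  set I := {s' : S' | ∃ s, R (Sum.inl s) (Sum.inr s')} with hIdef
  have hclosed1 : RClosed R (sumSet Dᶜ (∅ : Set S')) := by
    rintro x hx t ht
    have hxt : R x t := ht.elim id heq.symm
    rcases hx with ⟨u, hu, rfl⟩ | ⟨v, hv, rfl⟩
    · cases t with
      | inl w =>
          exact Or.inl ⟨w, fun ⟨v', hv'⟩ => hu ⟨v', heq.trans hxt hv'⟩, rfl⟩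
      | inr v => exact absurd ⟨v, hxt⟩ hu
    · exact absurd hv (Set.notMem_empty v)
  have hclosed2 : RClosed R (sumSet (∅ : Set S) Iᶜ) := by
    rintro x hx t ht
    have hxt : R x t := ht.elim id heq.symm
    rcases hx with ⟨u, hu, rfl⟩ | ⟨v, hv, rfl⟩
    · exact absurd hu (Set.notMem_empty u)
    · cases t with
      | inl w => exact absurd ⟨w, heq.symm hxt⟩ hv
      | inr w =>
          exact Or.inr ⟨w, fun ⟨u, hu⟩ => hv ⟨u, heq.trans hu (heq.symm hxt)⟩, rfl⟩
  have hDc : ∀ s s', R (Sum.inl s) (Sum.inr s') → ∀ a, M.τ a s Dᶜ = 0 := by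
    intro s s' h a
    have := hbis s s' h Dᶜ ∅ hdom.compl MeasurableSet.empty hclosed1 a
    simpa using this
  have hIc : ∀ s s', R (Sum.inl s) (Sum.inr s') → ∀ a, M'.τ a s' Iᶜ = 0 := by
    intro s s' h a
    have := hbis s s' h ∅ Iᶜ MeasurableSet.empty himg.compl hclosed2 a
    simpa using this.symm
  refine ⟨fun s ⟨s', h⟩ a => hDc s s' h a, ?_⟩
  intro s s' h A A' hA hA' hpair a
  have hclosed3 : RClosed R (sumSet (A ∩ D) (A' ∩ I)) := by
    rintro x hx t ht
    have hxt : R x t := ht.elim id heq.symm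
    rcases hx with ⟨u, ⟨huA, v0, hv0⟩, rfl⟩ | ⟨v, ⟨hvA, u0, hu0⟩, rfl⟩
    · cases t with
      | inl w =>
          have hwD : R (Sum.inl w) (Sum.inr v0) := heq.trans (heq.symm hxt) hv0
          have hv0A : v0 ∈ A' := (hpair u v0 hv0).mp huA
          exact Or.inl ⟨w, ⟨(hpair w v0 hwD).mpr hv0A, v0, hwD⟩, rfl⟩
      | inr w =>
          exact Or.inr ⟨w, ⟨(hpair u w hxt).mp huA, u, hxt⟩, rfl⟩
    · cases t with
      | inl w =>
          have hw : R (Sum.inl w) (Sum.inr v) := heq.symm hxt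
          exact Or.inl ⟨w, ⟨(hpair w v hw).mpr hvA, v, hw⟩, rfl⟩
      | inr w =>
          have hw : R (Sum.inl u0) (Sum.inr w) := heq.trans hu0 hxt
          exact Or.inr ⟨w, ⟨(hpair u0 w hw).mp ((hpair u0 v hu0).mpr hvA), u0, hw⟩, rfl⟩
  have key := hbis s s' h (A ∩ D) (A' ∩ I) (hA.inter hdom) (hA'.inter himg) hclosed3 a
  have e1 : M.τ a s A = M.τ a s (A ∩ D) := by
    refine le_antisymm ?_ (measure_mono Set.inter_subset_left)
    have hsub : A ⊆ (A ∩ D) ∪ Dᶜ := by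
      intro x hx
      by_cases hxD : x ∈ D
      · exact Or.inl ⟨hx, hxD⟩
      · exact Or.inr hxD
    calc M.τ a s A ≤ M.τ a s ((A ∩ D) ∪ Dᶜ) := measure_mono hsub
      _ ≤ M.τ a s (A ∩ D) + M.τ a s Dᶜ := measure_union_le _ _
      _ = M.τ a s (A ∩ D) := by rw [hDc s s' h a, add_zero]
  have e2 : M'.τ a s' A' = M'.τ a s' (A' ∩ I) := by
    refine le_antisymm ?_ (measure_mono Set.inter_subset_left)
    have hsub : A' ⊆ (A' ∩ I) ∪ Iᶜ := by
      intro x hx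
      by_cases hxI : x ∈ I
      · exact Or.inl ⟨hx, hxI⟩
      · exact Or.inr hxI
    calc M'.τ a s' A' ≤ M'.τ a s' ((A' ∩ I) ∪ Iᶜ) := measure_mono hsub
      _ ≤ M'.τ a s' (A' ∩ I) + M'.τ a s' Iᶜ := measure_union_le _ _
      _ = M'.τ a s' (A' ∩ I) := by rw [hIc s s' h a, add_zero]
  rw [e1, e2, key]
end

section
/- The union of an arbitrary family of external state bisimulations between two NLMPs is an external state bisimulation; likewise for external hit bisimulations. Moreover, every external state bisimulation between two NLMPs is an external hit bisimulation. -/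
open MeasureTheory

/-- The space of subprobability measures on `S`, with the σ-algebra generated by
the evaluation maps on measurable sets. -/
abbrev SubProb (S : Type*) [MeasurableSpace S] := {μ : Measure S // μ Set.univ ≤ 1}

/-- A nondeterministic labelled Markov process: each transition function returns a
measurable set of subprobability measures, and is measurable with respect to the
hit σ-algebra (preimages of the generating hit sets are measurable). -/
structure NLMP (L : Type*) (S : Type*) [MeasurableSpace S] where
  T : L → S → Set (SubProb S)
  val_meas : ∀ a s, MeasurableSet (T a s)
  hit_meas : ∀ a (D : Set (SubProb S)), MeasurableSet D →
    MeasurableSet {s | (T a s ∩ D).Nonempty}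

/-- The lifting of a relation `R ⊆ S × S'` to subprobability measures:
μ and μ' agree on every R-closed measurable pair. -/
def MeasLift {S S' : Type*} [MeasurableSpace S] [MeasurableSpace S']
    (R : S → S' → Prop) (μ : SubProb S) (μ' : SubProb S') : Prop :=
  ∀ (Q : Set S) (Q' : Set S'), MeasurableSet Q → MeasurableSet Q' →
    RClosedPair R Q Q' → μ.1 Q = μ'.1 Q'

/-- External state bisimulation between NLMPs. -/
def IsExtStateBisimN {L S S' : Type*} [MeasurableSpace S] [MeasurableSpace S']
    (N : NLMP L S) (N' : NLMP L S') (R : S → S' → Prop) : Prop :=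
  ∀ s s', R s s' → ∀ a,
    (∀ μ ∈ N.T a s, ∃ μ' ∈ N'.T a s', MeasLift R μ μ') ∧
    (∀ μ' ∈ N'.T a s', ∃ μ ∈ N.T a s, MeasLift R μ μ')

/-- Δ^×(Σ^×(R)): the smallest bi-σ-algebra (closed under coordinatewise complements and
countable unions) containing the pairs (Δ^{<q}(Q), Δ^{<q}(Q')) for q ∈ ℚ and
R-closed measurable pairs (Q, Q'). -/
inductive DeltaTimes {S S' : Type*} [MeasurableSpace S] [MeasurableSpace S']
    (R : S → S' → Prop) : Set (SubProb S) → Set (SubProb S') → Prop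
  | basic (q : ℚ) (Q : Set S) (Q' : Set S') (hQ : MeasurableSet Q)
      (hQ' : MeasurableSet Q') (h : RClosedPair R Q Q') :
      DeltaTimes R {μ : SubProb S | μ.1 Q < ENNReal.ofReal (q : ℝ)}
        {μ : SubProb S' | μ.1 Q' < ENNReal.ofReal (q : ℝ)}
  | compl (Θ : Set (SubProb S)) (Θ' : Set (SubProb S')) :
      DeltaTimes R Θ Θ' → DeltaTimes R Θᶜ Θ'ᶜ
  | iUnion (f : ℕ → Set (SubProb S)) (f' : ℕ → Set (SubProb S')) :
      (∀ n, DeltaTimes R (f n) (f' n)) → DeltaTimes R (⋃ n, f n) (⋃ n, f' n)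

/-- External hit bisimulation between NLMPs. -/
def IsExtHitBisimN {L S S' : Type*} [MeasurableSpace S] [MeasurableSpace S']
    (N : NLMP L S) (N' : NLMP L S') (R : S → S' → Prop) : Prop :=
  ∀ s s', R s s' → ∀ a (Θ : Set (SubProb S)) (Θ' : Set (SubProb S')),
    DeltaTimes R Θ Θ' → ((N.T a s ∩ Θ).Nonempty ↔ (N'.T a s' ∩ Θ').Nonempty)


lemma measLift_mono {S S' : Type*} [MeasurableSpace S] [MeasurableSpace S']
    {R R' : S → S' → Prop} (h : ∀ s s', R s s' → R' s s')
    {μ : SubProb S} {μ' : SubProb S'} (hl : MeasLift R μ μ') : MeasLift R' μ μ' :=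
  fun Q Q' hQ hQ' hc => hl Q Q' hQ hQ' (fun s s' hr => hc s s' (h s s' hr))

lemma deltaTimes_anti {S S' : Type*} [MeasurableSpace S] [MeasurableSpace S']
    {R R' : S → S' → Prop} (h : ∀ s s', R s s' → R' s s')
    {Θ : Set (SubProb S)} {Θ' : Set (SubProb S')} (hd : DeltaTimes R' Θ Θ') :
    DeltaTimes R Θ Θ' := by
  induction hd with
  | basic q Q Q' hQ hQ' hc =>
      exact DeltaTimes.basic q Q Q' hQ hQ' (fun s s' hr => hc s s' (h s s' hr))
  | compl Θ Θ' _ ih => exact DeltaTimes.compl _ _ ih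
  | iUnion f f' _ ih => exact DeltaTimes.iUnion f f' ih

lemma deltaTimes_closed {S S' : Type*} [MeasurableSpace S] [MeasurableSpace S']
    {R : S → S' → Prop} {Θ : Set (SubProb S)} {Θ' : Set (SubProb S')}
    (hd : DeltaTimes R Θ Θ') {μ : SubProb S} {μ' : SubProb S'}
    (hl : MeasLift R μ μ') : μ ∈ Θ ↔ μ' ∈ Θ' := by
  induction hd with
  | basic q Q Q' hQ hQ' hc =>
      simp only [Set.mem_setOf_eq, hl Q Q' hQ hQ' hc]
  | compl Θ Θ' _ ih => simp [Set.mem_compl_iff, ih]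
  | iUnion f f' _ ih => simp only [Set.mem_iUnion]; exact exists_congr ih

/-- Unions of external state (resp. hit) bisimulations between NLMPs are again external
state (resp. hit) bisimulations, and every external state bisimulation is an external
hit bisimulation. -/
theorem stmt19 {L S S' : Type*} [MeasurableSpace S] [MeasurableSpace S']
    (N : NLMP L S) (N' : NLMP L S') :
    (∀ F : Set (S → S' → Prop), (∀ R ∈ F, IsExtStateBisimN N N' R) →
      IsExtStateBisimN N N' (fun s s' => ∃ R ∈ F, R s s')) ∧
    (∀ F : Set (S → S' → Prop), (∀ R ∈ F, IsExtHitBisimN N N' R) →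
      IsExtHitBisimN N N' (fun s s' => ∃ R ∈ F, R s s')) ∧
    (∀ R : S → S' → Prop, IsExtStateBisimN N N' R → IsExtHitBisimN N N' R) :=  by
  refine ⟨?_, ?_, ?_⟩
  · intro F hF s s' ⟨R, hRF, hR⟩ a
    obtain ⟨h1, h2⟩ := hF R hRF s s' hR a
    constructor
    · intro μ hμ
      obtain ⟨μ', hμ', hlift⟩ := h1 μ hμ
      exact ⟨μ', hμ', measLift_mono (fun u u' h => ⟨R, hRF, h⟩) hlift⟩
    · intro μ' hμ'
      obtain ⟨μ, hμ, hlift⟩ := h2 μ' hμ'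
      exact ⟨μ, hμ, measLift_mono (fun u u' h => ⟨R, hRF, h⟩) hlift⟩
  · intro F hF s s' ⟨R, hRF, hR⟩ a Θ Θ' hd
    exact hF R hRF s s' hR a Θ Θ' (deltaTimes_anti (fun u u' h => ⟨R, hRF, h⟩) hd)
  · intro R hR s s' hss a Θ Θ' hd
    obtain ⟨h1, h2⟩ := hR s s' hss a
    constructor
    · rintro ⟨μ, hμT, hμΘ⟩
      obtain ⟨μ', hμ', hlift⟩ := h1 μ hμT
      exact ⟨μ', hμ', (deltaTimes_closed hd hlift).mp hμΘ⟩
    · rintro ⟨μ', hμT, hμΘ⟩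
      obtain ⟨μ, hμ, hlift⟩ := h2 μ' hμT
      exact ⟨μ, hμ, (deltaTimes_closed hd hlift).mpr hμΘ⟩
end
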